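/- arXiv:1804.09515 — 2 statements merged into one kernel-verified Lean document; each statement's English description precedes it below -/
import Mathlib

section
/- Let H be an infinite-dimensional complex Hilbert space, let G be a subgroup of U(H), and let (pₙ) be a sequence of mutually orthogonal nonzero orthogonal projections on H with ∑ₙ pₙ ξ = ξ for every ξ ∈ H, satisfying condition (A): for every sequence (gₙ) in G with gₙpₙ = pₙgₙ for all n, every unitary u on H satisfying u pₙ = gₙ pₙ for all n belongs to G. Let W₁ ⊆ W₂ ⊆ ⋯ be an increasing chain of symmetric subsets of G with ⋃ₙ Wₙ = G. Then there exists k ∈ ℕ such that pₖ is full for Wₖ, i.e. for every g ∈ G(pₖ) there exists h ∈ Wₖ with g pₖ = h pₖ. -/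
set_option maxHeartbeats 1000000
set_option synthInstance.maxHeartbeats 400000

/-- `g` is a product of `k` elements of `S`. -/
def IsProdOf {G : Type*} [Monoid G] (k : ℕ) (S : Set G) (g : G) : Prop :=
  ∃ l : List G, l.length = k ∧ (∀ x ∈ l, x ∈ S) ∧ l.prod = g

/-- A group `G` has *strong uncountable cofinality* if for every increasing chain of subsets
`W₁ ⊆ W₂ ⊆ ⋯` of `G` whose union is all of `G`, there are `n, k` such that every element of
`G` is a product of `k` elements of `W n`. -/
def StrongUncountableCofinality (G : Type*) [Group G] : Prop :=
  ∀ W : ℕ → Set G, Monotone W → (⋃ n, W n) = Set.univ →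
    ∃ n k : ℕ, ∀ g : G, IsProdOf k (W n) g

/-- A group `G` has *`k`-strong uncountable cofinality* if for every increasing chain of subsets
`W₁ ⊆ W₂ ⊆ ⋯` of `G` whose union is all of `G`, there is `n` such that every element of
`G` is a product of `k` elements of `W n`. -/
def KStrongUncountableCofinality (G : Type*) [Group G] (k : ℕ) : Prop :=
  ∀ W : ℕ → Set G, Monotone W → (⋃ n, W n) = Set.univ →
    ∃ n : ℕ, ∀ g : G, IsProdOf k (W n) g

variable {H : Type*} [NormedAddCommGroup H] [InnerProductSpace ℂ H] [CompleteSpace H]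

local notation "⟪" x ", " y "⟫" => @inner ℂ _ _ x y

private lemma selfadj_inner_move {q : H →L[ℂ] H} (hq : IsSelfAdjoint q) (x y : H) :
    ⟪x, q y⟫ = ⟪q x, y⟫ := by
  have h := ContinuousLinearMap.adjoint_inner_right q x y
  rwa [hq.adjoint_eq] at h

private lemma inner_proj_self {q : H →L[ℂ] H} (hq : IsSelfAdjoint q) (hqq : q * q = q)
    (x : H) : ⟪x, q x⟫ = ((‖q x‖ : ℂ) ^ 2) := by
  have hpp : q x = q (q x) := by
    conv_lhs => rw [← hqq]
    rfl
  calc ⟪x, q x⟫ = ⟪x, q (q x)⟫ := by rw [← hpp]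
    _ = ⟪q x, q x⟫ := by rw [selfadj_inner_move hq]
    _ = ((‖q x‖ : ℂ) ^ 2) := inner_self_eq_norm_sq_to_K _

private lemma parseval_aux (p : ℕ → (H →L[ℂ] H)) (hsa : ∀ n, IsSelfAdjoint (p n))
    (hidem : ∀ n, p n * p n = p n)
    (hsum : ∀ ξ : H, HasSum (fun n => p n ξ) ξ) (ξ : H) :
    HasSum (fun n => (‖p n ξ‖ ^ 2 : ℝ)) (‖ξ‖ ^ 2) := by
  have h1 : HasSum (fun n => ⟪ξ, p n ξ⟫) ⟪ξ, ξ⟫ := (innerSL ℂ ξ).hasSum (hsum ξ)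
  simp only [fun n => inner_proj_self (hsa n) (hidem n) ξ] at h1
  have h3 : HasSum (fun n => Complex.re ((‖p n ξ‖ : ℂ) ^ 2))
      (Complex.re ⟪ξ, ξ⟫) := Complex.reCLM.hasSum h1
  have h4 : (⟪ξ, ξ⟫).re = ‖ξ‖ ^ 2 := inner_self_eq_norm_sq (𝕜 := ℂ) ξ
  simpa [← Complex.ofReal_pow, h4] using h3

/-- Construction of the "diagonal" operator `ξ ↦ ∑ T n (p n ξ)`. -/
private lemma diag_exists (p : ℕ → (H →L[ℂ] H)) (hsa : ∀ n, IsSelfAdjoint (p n))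
    (hidem : ∀ n, p n * p n = p n) (horth : ∀ m n, m ≠ n → p m * p n = 0)
    (hsum : ∀ ξ : H, HasSum (fun n => p n ξ) ξ)
    (T : ℕ → (H →L[ℂ] H)) (hT : ∀ n, T n ∈ unitary (H →L[ℂ] H))
    (hcomm : ∀ n, T n * p n = p n * T n) :
    ∃ U : H →L[ℂ] H, (∀ ξ : H, HasSum (fun n => T n (p n ξ)) (U ξ)) ∧
      (∀ ξ : H, ‖U ξ‖ = ‖ξ‖) ∧ (∀ n (ξ : H), p n (U ξ) = T n (p n ξ)) := by
  classical
  have hcomm' : ∀ n (ξ : H), T n (p n ξ) = p n (T n ξ) := by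
    intro n ξ
    have := ContinuousLinearMap.ext_iff.mp (hcomm n) ξ
    simpa using this
  have hidem' : ∀ n (ξ : H), p n (p n ξ) = p n ξ := by
    intro n ξ
    have := ContinuousLinearMap.ext_iff.mp (hidem n) ξ
    simpa using this
  have horth' : ∀ m n, m ≠ n → ∀ ξ : H, p m (p n ξ) = 0 := by
    intro m n hmn ξ
    have := ContinuousLinearMap.ext_iff.mp (horth m n hmn) ξ
    simpa using this
  -- orthogonal family of ranges
  set K : ℕ → Submodule ℂ H := fun n => LinearMap.range (p n).toLinearMap with hK
  have hVfam : OrthogonalFamily ℂ (fun n => K n) (fun n => (K n).subtypeₗᵢ) := by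
    intro m n hmn x y
    obtain ⟨a, ha⟩ := x.2
    obtain ⟨b, hb⟩ := y.2
    simp only [Submodule.coe_subtypeₗᵢ, Submodule.coe_subtype]
    rw [← ha, ← hb, ContinuousLinearMap.coe_coe, ContinuousLinearMap.coe_coe, ← selfadj_inner_move (hsa m), horth' m n hmn, inner_zero_right]
  have hmem : ∀ (ξ : H) n, T n (p n ξ) ∈ K n := by
    intro ξ n
    rw [hcomm']
    exact ⟨T n ξ, rfl⟩
  have hsummable : ∀ ξ : H, Summable (fun n => T n (p n ξ)) := by
    intro ξ
    have hs2 : Summable (fun n => (‖(⟨T n (p n ξ), hmem ξ n⟩ : K n)‖ : ℝ) ^ 2) := by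
      have he : ∀ n, (‖(⟨T n (p n ξ), hmem ξ n⟩ : K n)‖ : ℝ) ^ 2 = ‖p n ξ‖ ^ 2 := by
        intro n
        have e1 : (‖(⟨T n (p n ξ), hmem ξ n⟩ : K n)‖ : ℝ) = ‖T n (p n ξ)‖ := rfl
        rw [e1, ContinuousLinearMap.norm_map_of_mem_unitary (hT n)]
      rw [funext he]
      exact (parseval_aux p hsa hidem hsum ξ).summable
    have := (hVfam.summable_iff_norm_sq_summable
      (fun n => (⟨T n (p n ξ), hmem ξ n⟩ : K n))).mpr hs2
    simpa using this
  -- the linear map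
  let U0 : H →ₗ[ℂ] H :=
    { toFun := fun ξ => ∑' n, T n (p n ξ)
      map_add' := by
        intro ξ η
        have he : (fun n => T n (p n (ξ + η))) = fun n => T n (p n ξ) + T n (p n η) := by
          funext n; simp
        show ∑' n, T n (p n (ξ + η)) = (∑' n, T n (p n ξ)) + ∑' n, T n (p n η)
        rw [he, Summable.tsum_add (hsummable ξ) (hsummable η)]
      map_smul' := by
        intro c ξ
        have he : (fun n => T n (p n (c • ξ))) = fun n => c • T n (p n ξ) := by
          funext n; simp
        show ∑' n, T n (p n (c • ξ)) = c • ∑' n, T n (p n ξ)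
        rw [he, Summable.tsum_const_smul c (hsummable ξ)] }
  have hS : ∀ ξ : H, HasSum (fun n => T n (p n ξ)) (U0 ξ) := fun ξ => (hsummable ξ).hasSum
  have hproj : ∀ n (ξ : H), p n (U0 ξ) = T n (p n ξ) := by
    intro n ξ
    have h1 : HasSum (fun m => p n (T m (p m ξ))) (p n (U0 ξ)) := (p n).hasSum (hS ξ)
    have h2 : HasSum (fun m => p n (T m (p m ξ))) (p n (T n (p n ξ))) := by
      apply hasSum_single n
      intro m hm
      rw [hcomm' m, horth' n m (Ne.symm hm)]
    have h3 := h1.unique h2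
    rw [h3, hcomm' n ξ, hidem']
  have hnorm : ∀ ξ : H, ‖U0 ξ‖ = ‖ξ‖ := by
    intro ξ
    have hA : HasSum (fun n => ⟪U0 ξ, T n (p n ξ)⟫) ⟪U0 ξ, U0 ξ⟫ :=
      (innerSL ℂ (U0 ξ)).hasSum (hS ξ)
    have hterm : ∀ n, ⟪U0 ξ, T n (p n ξ)⟫ = ((‖p n ξ‖ : ℂ) ^ 2) := by
      intro n
      rw [← hproj n ξ, inner_proj_self (hsa n) (hidem n), hproj n ξ,
        ContinuousLinearMap.norm_map_of_mem_unitary (hT n)]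
    simp only [hterm] at hA
    have hB : HasSum (fun n => ((‖p n ξ‖ : ℂ) ^ 2)) ((‖ξ‖ : ℂ) ^ 2) := by
      have := Complex.ofRealCLM.hasSum (parseval_aux p hsa hidem hsum ξ)
      simpa [Complex.ofReal_pow] using this
    have h5 : ⟪U0 ξ, U0 ξ⟫ = ((‖ξ‖ : ℂ) ^ 2) := hA.unique hB
    rw [inner_self_eq_norm_sq_to_K] at h5
    have h6 : (‖U0 ξ‖ : ℝ) ^ 2 = ‖ξ‖ ^ 2 := Complex.ofReal_injective (by push_cast; exact h5)
    exact (sq_eq_sq₀ (norm_nonneg _) (norm_nonneg _)).mp h6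
  refine ⟨U0.mkContinuous 1 (fun ξ => by rw [hnorm]; simp), hS, hnorm, hproj⟩

private lemma comm_of_mem_supp {q : H →L[ℂ] H} (hq : IsSelfAdjoint q)
    (x : H →L[ℂ] H) (hx : x ∈ unitary (H →L[ℂ] H))
    (hfix : ∀ ξ : H, x ((1 - q) ξ) = (1 - q) ξ) : x * q = q * x := by
  have E1 : x * (1 - q) = 1 - q := by
    ext ξ
    simpa using hfix ξ
  have E2 : (1 - q) * star x = 1 - q := by
    have h := congrArg star E1
    simpa [star_mul, star_sub, star_one, hq.star_eq] using h
  have E3 : (1 - q) * x = 1 - q := by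
    calc (1 - q) * x = ((1 - q) * star x) * x := by rw [E2]
      _ = (1 - q) * (star x * x) := by rw [mul_assoc]
      _ = 1 - q := by rw [Unitary.star_mul_self_of_mem hx, mul_one]
  have e1 : x - x * q = 1 - q := by
    have := E1
    rwa [mul_sub, mul_one] at this
  have e3 : x - q * x = 1 - q := by
    have := E3
    rwa [sub_mul, one_mul] at this
  calc x * q = x - (x - x * q) := by rw [sub_sub_cancel]
    _ = x - (x - q * x) := by rw [e1, e3]
    _ = q * x := by rw [sub_sub_cancel]

private lemma diag_mem_unitary (p : ℕ → (H →L[ℂ] H)) (hsa : ∀ n, IsSelfAdjoint (p n))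
    (hidem : ∀ n, p n * p n = p n) (horth : ∀ m n, m ≠ n → p m * p n = 0)
    (hsum : ∀ ξ : H, HasSum (fun n => p n ξ) ξ)
    (T : ℕ → (H →L[ℂ] H)) (hT : ∀ n, T n ∈ unitary (H →L[ℂ] H))
    (hcomm : ∀ n, T n * p n = p n * T n) :
    ∃ u : unitary (H →L[ℂ] H), ∀ n, (u : H →L[ℂ] H) * p n = T n * p n := by
  have hidem' : ∀ n (ξ : H), p n (p n ξ) = p n ξ := by
    intro n ξ
    have := ContinuousLinearMap.ext_iff.mp (hidem n) ξ
    simpa using this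
  have horth' : ∀ m n, m ≠ n → ∀ ξ : H, p m (p n ξ) = 0 := by
    intro m n hmn ξ
    have := ContinuousLinearMap.ext_iff.mp (horth m n hmn) ξ
    simpa using this
  obtain ⟨U, hU, hUn, hUp⟩ := diag_exists p hsa hidem horth hsum T hT hcomm
  have hT' : ∀ n, star (T n) ∈ unitary (H →L[ℂ] H) := fun n => Unitary.star_mem (hT n)
  have hcomm' : ∀ n, star (T n) * p n = p n * star (T n) := by
    intro n
    have h := congrArg star (hcomm n)
    simp only [star_mul, (hsa n).star_eq] at h
    exact h.symm
  obtain ⟨V, hV, hVn, hVp⟩ := diag_exists p hsa hidem horth hsum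
    (fun n => star (T n)) hT' hcomm'
  have hVU : ∀ ξ : H, V (U ξ) = ξ := by
    intro ξ
    have h1 : HasSum (fun n => star (T n) (p n (U ξ))) (V (U ξ)) := hV (U ξ)
    have h2 : (fun n => star (T n) (p n (U ξ))) = fun n => p n ξ := by
      funext n
      rw [hUp n ξ]
      have e : star (T n) (T n (p n ξ)) = (star (T n) * T n) (p n ξ) := rfl
      rw [e, Unitary.star_mul_self_of_mem (hT n)]
      rfl
    rw [h2] at h1
    exact h1.unique (hsum ξ)
  have hUV : ∀ ξ : H, U (V ξ) = ξ := by
    intro ξ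
    have h1 : HasSum (fun n => T n (p n (V ξ))) (U (V ξ)) := hU (V ξ)
    have h2 : (fun n => T n (p n (V ξ))) = fun n => p n ξ := by
      funext n
      rw [hVp n ξ]
      have e : T n (star (T n) (p n ξ)) = (T n * star (T n)) (p n ξ) := rfl
      rw [e, Unitary.mul_star_self_of_mem (hT n)]
      rfl
    rw [h2] at h1
    exact h1.unique (hsum ξ)
  have hUV1 : U * V = 1 := by
    ext ξ
    simpa [ContinuousLinearMap.mul_apply] using hUV ξ
  have hVU1 : V * U = 1 := by
    ext ξ
    simpa [ContinuousLinearMap.mul_apply] using hVU ξ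
  have hadjU : ContinuousLinearMap.adjoint U = V := by
    have h1 : ContinuousLinearMap.adjoint U * U = 1 :=
      (ContinuousLinearMap.norm_map_iff_adjoint_comp_self U).mp hUn
    calc ContinuousLinearMap.adjoint U
        = ContinuousLinearMap.adjoint U * (U * V) := by rw [hUV1, mul_one]
      _ = (ContinuousLinearMap.adjoint U * U) * V := by rw [mul_assoc]
      _ = V := by rw [h1, one_mul]
  have humem : U ∈ unitary (H →L[ℂ] H) := by
    constructor
    · rw [ContinuousLinearMap.star_eq_adjoint, hadjU]
      exact hVU1
    · rw [ContinuousLinearMap.star_eq_adjoint, hadjU]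
      exact hUV1
  refine ⟨⟨U, humem⟩, ?_⟩
  intro n
  ext ξ
  have h1 := hU (p n ξ)
  have h2 : HasSum (fun m => T m (p m (p n ξ))) (T n (p n ξ)) := by
    have h3 : HasSum (fun m => T m (p m (p n ξ))) (T n (p n (p n ξ))) := by
      apply hasSum_single n
      intro m hm
      rw [horth' m n hm]
      simp
    rwa [hidem'] at h3
  have h4 : U (p n ξ) = T n (p n ξ) := h1.unique h2
  simpa [ContinuousLinearMap.mul_apply] using h4

/-- `p` is an orthogonal projection on `H`. -/
def IsOrthoProjection (p : H →L[ℂ] H) : Prop :=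
  IsSelfAdjoint p ∧ p * p = p

/-- `G(p)`: the set of elements of a subgroup `G ≤ U(H)` fixing every vector in the range of
`1 - p` (equivalently, with support at most `p`). -/
def suppSubSet (G : Subgroup (unitary (H →L[ℂ] H))) (p : H →L[ℂ] H) : Set G :=
  {g | ∀ ξ : H, ((g : unitary (H →L[ℂ] H)) : H →L[ℂ] H) ((1 - p) ξ) = (1 - p) ξ}

/-- The set of conjugates of `g` or of `g⁻¹` by elements of `G(p)`. -/
def conjByGp (G : Subgroup (unitary (H →L[ℂ] H))) (p : H →L[ℂ] H) (g : G) : Set G :=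
  {y | ∃ w ∈ suppSubSet G p, y = w * g * w⁻¹ ∨ y = w * g⁻¹ * w⁻¹}

/-- Condition (A): the `p n` are mutually orthogonal nonzero projections summing to the
identity, and any unitary acting as some element of `G` on each `p n` belongs to `G`. -/
def CondA (G : Subgroup (unitary (H →L[ℂ] H))) (p : ℕ → (H →L[ℂ] H)) : Prop :=
  (∀ n, IsOrthoProjection (p n)) ∧ (∀ n, p n ≠ 0) ∧
    (∀ m n, m ≠ n → p m * p n = 0) ∧ (∀ ξ : H, HasSum (fun n => p n ξ) ξ) ∧
    (∀ g : ℕ → G, (∀ n,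
        ((g n : unitary (H →L[ℂ] H)) : H →L[ℂ] H) * p n =
          p n * ((g n : unitary (H →L[ℂ] H)) : H →L[ℂ] H)) →
      ∀ u : unitary (H →L[ℂ] H),
        (∀ n, (u : H →L[ℂ] H) * p n = ((g n : unitary (H →L[ℂ] H)) : H →L[ℂ] H) * p n) →
          u ∈ G)

/-- Condition (B): below every nonzero `p ∈ 𝓋` there is a nonzero `q ∈ 𝓋`, `q ≤ p`, and
`g ∈ G(p)` such that every element of `G(q)` is a product of `n` conjugates (by elements of
`G(p)`) of `g` or of `g⁻¹`. -/
def CondB (G : Subgroup (unitary (H →L[ℂ] H))) (𝓋 : Set (H →L[ℂ] H)) : Prop :=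
  ∀ p ∈ 𝓋, p ≠ 0 → ∃ n : ℕ, ∃ q ∈ 𝓋, q ≠ 0 ∧ p * q = q ∧
    ∃ g ∈ suppSubSet G p, ∀ h ∈ suppSubSet G q, IsProdOf n (conjByGp G p g) h

/-- Condition (C): for each nonzero `p ∈ 𝓋`, the group `G` is boundedly generated by
`G(p)` together with a finite set. -/
def CondC (G : Subgroup (unitary (H →L[ℂ] H))) (𝓋 : Set (H →L[ℂ] H)) : Prop :=
  ∀ p ∈ 𝓋, p ≠ 0 → ∃ m : ℕ, ∃ F : Finset G,
    ∀ x : G, IsProdOf m (suppSubSet G p ∪ ↑F) x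

/-- Condition (B) with a fixed exponent `n`. -/
def CondBFixed (G : Subgroup (unitary (H →L[ℂ] H))) (𝓋 : Set (H →L[ℂ] H)) (n : ℕ) : Prop :=
  ∀ p ∈ 𝓋, p ≠ 0 → ∃ q ∈ 𝓋, q ≠ 0 ∧ p * q = q ∧
    ∃ g ∈ suppSubSet G p, ∀ h ∈ suppSubSet G q, IsProdOf n (conjByGp G p g) h

/-- Condition (C) with a fixed exponent `m`. -/
def CondCFixed (G : Subgroup (unitary (H →L[ℂ] H))) (𝓋 : Set (H →L[ℂ] H)) (m : ℕ) : Prop :=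
  ∀ p ∈ 𝓋, p ≠ 0 → ∃ F : Finset G,
    ∀ x : G, IsProdOf m (suppSubSet G p ∪ ↑F) x

/-- Lemma 1: given condition (A) and an exhaustive increasing chain of symmetric subsets
`(W n)` of `G`, some `p k` is full for `W k`. -/

theorem exists_full_projection (hdim : ¬ FiniteDimensional ℂ H)
    (G : Subgroup (unitary (H →L[ℂ] H))) (p : ℕ → (H →L[ℂ] H)) (hA : CondA G p)
    (W : ℕ → Set G) (hmono : Monotone W) (hsymm : ∀ n, (W n)⁻¹ = W n)
    (hexh : (⋃ n, W n) = Set.univ) :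
    ∃ k : ℕ, ∀ g ∈ suppSubSet G (p k), ∃ h ∈ W k,
      ((g : unitary (H →L[ℂ] H)) : H →L[ℂ] H) * p k =
        ((h : unitary (H →L[ℂ] H)) : H →L[ℂ] H) * p k := by
  by_contra hcon
  push_neg at hcon
  choose g hgS hgW using hcon
  obtain ⟨hop, hnz, horth, hsum, hAmem⟩ := hA
  have hsa : ∀ n, IsSelfAdjoint (p n) := fun n => (hop n).1
  have hidem : ∀ n, p n * p n = p n := fun n => (hop n).2
  set T : ℕ → (H →L[ℂ] H) := fun n => ((g n : unitary (H →L[ℂ] H)) : H →L[ℂ] H) with hTdef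
  have hTu : ∀ n, T n ∈ unitary (H →L[ℂ] H) := fun n => (g n : unitary (H →L[ℂ] H)).prop
  have hcomm : ∀ n, T n * p n = p n * T n := by
    intro n
    exact comm_of_mem_supp (hsa n) (T n) (hTu n) (fun ξ => hgS n ξ)
  obtain ⟨u, hu⟩ := diag_mem_unitary p hsa hidem horth hsum T hTu hcomm
  have humem : u ∈ G := hAmem g hcomm u hu
  have hmem2 : (⟨u, humem⟩ : G) ∈ ⋃ n, W n := by rw [hexh]; trivial
  obtain ⟨m, hm⟩ := Set.mem_iUnion.mp hmem2
  exact hgW m ⟨u, humem⟩ hm (hu m).symm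
end

section
/- Let H be an infinite-dimensional complex Hilbert space, let G be a subgroup of U(H), and let 𝒫 be a set of orthogonal projections on H satisfying conditions (A) and (B): (A) there exists a sequence (pₙ) of mutually orthogonal nonzero projections in 𝒫 with ∑ₙ pₙ ξ = ξ for every ξ ∈ H, such that for every sequence (gₙ) in G with gₙpₙ = pₙgₙ for all n, every unitary u on H satisfying u pₙ = gₙ pₙ for all n belongs to G; (B) for each nonzero p ∈ 𝒫 there exist n ∈ ℕ, a nonzero projection q ∈ 𝒫 with q ≤ p, and g ∈ G(p) such that every element of G(q) is a product of n conjugates, by elements of G(p), of g or of g⁻¹. Let W₁ ⊆ W₂ ⊆ ⋯ be an increasing chain of symmetric subsets of G with ⋃ₙ Wₙ = G and let k be such that pₖ is full for Wₖ. Then there exist n ∈ ℕ, a nonzero projection q ∈ 𝒫 with q ≤ pₖ, and l ∈ ℕ such that every element of G(q) is a product of 3n elements of W_l. -/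
set_option maxHeartbeats 1000000
set_option synthInstance.maxHeartbeats 400000

variable {H : Type*} [NormedAddCommGroup H] [InnerProductSpace ℂ H] [CompleteSpace H]

theorem comm_helper {A : Type*} [Ring A] [StarRing A] (P U Gop : A)
    (hP : star P = P)
    (hU : star U * U = 1) (hGst : star Gop * Gop = 1)
    (hUP : U * P = P) (hG1 : Gop * (1 - P) = 1 - P) :
    U * Gop = Gop * U := by
  have hPU : P * U = P := by
    have h1 : P * star U = P := by
      have := congrArg star hUP
      simpa [star_mul, hP] using this
    calc P * U = (P * star U) * U := by rw [h1]
      _ = P * (star U * U) := by rw [mul_assoc]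
      _ = P := by rw [hU, mul_one]
  have hG1' : (1 - P) * Gop = 1 - P := by
    have h1 : (1 - P) * star Gop = 1 - P := by
      have := congrArg star hG1
      simpa [star_mul, star_sub, hP] using this
    calc (1 - P) * Gop = ((1 - P) * star Gop) * Gop := by rw [h1]
      _ = (1 - P) * (star Gop * Gop) := by rw [mul_assoc]
      _ = 1 - P := by rw [hGst, mul_one]
  have e1 : Gop * P = Gop - (1 - P) := by
    rw [mul_sub, mul_one] at hG1
    rw [← hG1]; abel
  have e2 : P * Gop = Gop - (1 - P) := by
    rw [sub_mul, one_mul] at hG1'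
    rw [← hG1']; abel
  have hGP : Gop * P = P * Gop := by rw [e1, e2]
  have hdecomp : Gop = Gop * P + (1 - P) := by rw [e1]; abel
  have hUGP : U * (Gop * P) = Gop * P := by
    rw [hGP, ← mul_assoc, hUP]
  have L : U * Gop = Gop * P + (U - P) := by
    conv_lhs => rw [hdecomp]
    rw [mul_add, mul_sub, mul_one, hUP, hUGP]
  have R : Gop * U = Gop * P + (U - P) := by
    conv_lhs => rw [hdecomp]
    rw [add_mul, sub_mul, one_mul, hPU, mul_assoc, hPU]
  rw [L, R]

theorem isProdOf_prod {G : Type*} [Monoid G] {S T : Set G} {m : ℕ}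
    (hST : ∀ x ∈ S, IsProdOf m T x) :
    ∀ L : List G, (∀ x ∈ L, x ∈ S) → IsProdOf (m * L.length) T L.prod := by
  intro L
  induction L with
  | nil => intro _; exact ⟨[], by simp, by simp, by simp⟩
  | cons a L ih =>
    intro hmem
    obtain ⟨la, hla, hlaT, hlaprod⟩ := hST a (hmem a (by simp))
    obtain ⟨lL, hlL, hlLT, hlLprod⟩ := ih (fun x hx => hmem x (by simp [hx]))
    refine ⟨la ++ lL, ?_, ?_, ?_⟩
    · simp [hla, hlL, Nat.mul_succ]; omega
    · intro x hx
      rcases List.mem_append.mp hx with h | h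
      exacts [hlaT x h, hlLT x h]
    · rw [List.prod_append, hlaprod, hlLprod, List.prod_cons]

/-- Lemma 2: under conditions (A) and (B), if `p k` is full for `W k`, then all of `G(q)` for
some nonzero `q ≤ p k`, `q ∈ 𝓋`, consists of products of `3n` elements of some `W l`. -/
theorem subgroup_in_power_of_chain (hdim : ¬ FiniteDimensional ℂ H)
    (G : Subgroup (unitary (H →L[ℂ] H))) (𝓋 : Set (H →L[ℂ] H))
    (p : ℕ → (H →L[ℂ] H)) (hp𝓋 : ∀ n, p n ∈ 𝓋) (hA : CondA G p) (hB : CondB G 𝓋)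
    (W : ℕ → Set G) (hmono : Monotone W) (hsymm : ∀ n, (W n)⁻¹ = W n)
    (hexh : (⋃ n, W n) = Set.univ)
    (k : ℕ)
    (hfull : ∀ g ∈ suppSubSet G (p k), ∃ h ∈ W k,
      ((g : unitary (H →L[ℂ] H)) : H →L[ℂ] H) * p k =
        ((h : unitary (H →L[ℂ] H)) : H →L[ℂ] H) * p k) :
    ∃ n : ℕ, ∃ q ∈ 𝓋, q ≠ 0 ∧ p k * q = q ∧ ∃ l : ℕ,
      ∀ h ∈ suppSubSet G q, IsProdOf (3 * n) (W l) h := by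
  obtain ⟨hproj, hpne, _horth, _hsum, _hcondA⟩ := hA
  obtain ⟨n, q, hq𝓋, hq0, hpq, g, hg, hGq⟩ := hB (p k) (hp𝓋 k) (hpne k)
  have hgU : (g : G) ∈ ⋃ m, W m := by rw [hexh]; trivial
  obtain ⟨l₀, hgl₀⟩ := Set.mem_iUnion.mp hgU
  set l := max k l₀ with hl
  have hWk : W k ⊆ W l := hmono (le_max_left _ _)
  have hWl₀ : W l₀ ⊆ W l := hmono (le_max_right _ _)
  -- the coercion from `G` to operators
  set Op : G → (H →L[ℂ] H) := fun a => ((a : unitary (H →L[ℂ] H)) : H →L[ℂ] H) with hOp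
  have hOpmul : ∀ a b : G, Op (a * b) = Op a * Op b := fun a b => rfl
  have hOpinv : ∀ a : G, Op a⁻¹ = star (Op a) := by
    intro a
    show ((((a : unitary (H →L[ℂ] H)))⁻¹ : unitary (H →L[ℂ] H)) : H →L[ℂ] H) = _
    rw [← Unitary.star_eq_inv, Unitary.coe_star]
  have hOpinj : Function.Injective Op := fun a b h => Subtype.ext (Subtype.ext h)
  have hOpstar : ∀ a : G, star (Op a) * Op a = 1 := fun a =>
    Unitary.star_mul_self_of_mem (a : unitary (H →L[ℂ] H)).prop
  have hPsa : star (p k) = p k := (hproj k).1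
  -- `g` acts trivially on the range of `1 - p k`
  have hgop : Op g * (1 - p k) = 1 - p k := by
    ext ξ
    simpa [ContinuousLinearMap.mul_apply] using hg ξ
  -- every conjugate of `g` or `g⁻¹` by an element of `G(p k)` is a product of 3 elements of `W l`
  have hconj3 : ∀ x ∈ conjByGp G (p k) g, IsProdOf 3 (W l) x := by
    rintro x ⟨w, hw, hx⟩
    obtain ⟨h', hh'W, hops⟩ := hfull w hw
    set u : G := h'⁻¹ * w with hu
    have hup : Op u * p k = p k := by
      have : Op u = star (Op h') * Op w := by rw [hu, hOpmul, hOpinv]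
      rw [this, mul_assoc, hops, ← mul_assoc, hOpstar, one_mul]
    have hcommOp : Op u * Op g = Op g * Op u :=
      comm_helper (p k) (Op u) (Op g) hPsa (hOpstar u) (hOpstar g) hup hgop
    have hcomm : u * g = g * u := hOpinj (by rw [hOpmul u g, hOpmul g u]; exact hcommOp)
    have hconj : u * g * u⁻¹ = g := by rw [mul_inv_eq_iff_eq_mul]; exact hcomm
    have hconj' : u * g⁻¹ * u⁻¹ = g⁻¹ := by
      rw [mul_inv_eq_iff_eq_mul]
      exact (Commute.inv_right hcomm : Commute u g⁻¹)
    have hw' : w = h' * u := by rw [hu]; group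
    have hh'l : h' ∈ W l := hWk hh'W
    have hh'invl : h'⁻¹ ∈ W l := by
      refine hWk ?_
      rw [← hsymm k]
      exact Set.inv_mem_inv.mpr hh'W
    have hgll : (g : G) ∈ W l := hWl₀ hgl₀
    have hginvl : (g : G)⁻¹ ∈ W l := by
      refine hWl₀ ?_
      rw [← hsymm l₀]
      exact Set.inv_mem_inv.mpr hgl₀
    rcases hx with hx | hx
    · refine ⟨[h', g, h'⁻¹], by simp, ?_, ?_⟩
      · intro y hy
        simp only [List.mem_cons, List.not_mem_nil, or_false] at hy
        rcases hy with rfl | rfl | rfl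
        exacts [hh'l, hgll, hh'invl]
      · rw [hx, hw',
          show h' * u * g * (h' * u)⁻¹ = h' * (u * g * u⁻¹) * h'⁻¹ from by group, hconj]
        simp [mul_assoc]
    · refine ⟨[h', g⁻¹, h'⁻¹], by simp, ?_, ?_⟩
      · intro y hy
        simp only [List.mem_cons, List.not_mem_nil, or_false] at hy
        rcases hy with rfl | rfl | rfl
        exacts [hh'l, hginvl, hh'invl]
      · rw [hx, hw',
          show h' * u * g⁻¹ * (h' * u)⁻¹ = h' * (u * g⁻¹ * u⁻¹) * h'⁻¹ from by group, hconj']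
        simp [mul_assoc]
  refine ⟨n, q, hq𝓋, hq0, hpq, l, ?_⟩
  intro h hh
  obtain ⟨L, hlen, hmem, hprodL⟩ := hGq h hh
  have := isProdOf_prod hconj3 L hmem
  rw [hlen, hprodL] at this
  exact this
end
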